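/- Let X be a compact metric space, ℱ a convex, weak*-compact family of Borel probability measures on X, and μ a finite positive Borel measure on X which is singular with respect to every λ ∈ ℱ. Then there exists a Borel set E ⊆ X such that μ(X \ E) = 0 and λ(E) = 0 for every λ ∈ ℱ. -/

import Mathlib

open MeasureTheory Set Filter
open scoped ENNReal NNReal Topology BoundedContinuousFunction

section helpers

variable {X : Type*} [MetricSpace X] [CompactSpace X] [MeasurableSpace X] [BorelSpace X]

private lemma rainwater_pointwise (μ ν : Measure X) [IsFiniteMeasure μ] [IsFiniteMeasure ν]
    (h : μ ⟂ₘ ν) {δ : ℝ} (hδ : 0 < δ) :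
    ∃ f : X →ᵇ ℝ, (∀ x, f x ∈ Set.Icc (0:ℝ) 1) ∧
      (∫ x, f x ∂ν) < δ ∧ (∫ x, (1 - f x) ∂μ) < δ := by
  obtain ⟨s, hs, hμs, hνs⟩ := h
  have hδ' : (ENNReal.ofReal δ) ≠ 0 := by simp [hδ, ENNReal.ofReal_pos.mpr hδ]
  obtain ⟨K, hKs, hKclosed, hK⟩ := hs.compl.exists_isClosed_diff_lt (measure_ne_top μ _) hδ'
  have hμKc : μ Kᶜ < ENNReal.ofReal δ := by
    have h2 : Kᶜ ⊆ (sᶜ \ K) ∪ s := by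
      intro x hx
      by_cases hxs : x ∈ s
      · exact Or.inr hxs
      · exact Or.inl ⟨hxs, hx⟩
    calc μ Kᶜ ≤ μ (sᶜ \ K) + μ s := (measure_mono h2).trans (measure_union_le _ _)
      _ = μ (sᶜ \ K) := by rw [hμs, add_zero]
      _ < _ := hK
  have hνK : ν K = 0 := le_antisymm (hνs ▸ measure_mono hKs) zero_le
  obtain ⟨U, hKU, hUopen, hνU⟩ := K.exists_isOpen_lt_of_lt _
    (by rw [hνK]; exact (ENNReal.ofReal_pos.mpr hδ))
  obtain ⟨f₀, hf0, hf1, hf01⟩ := exists_continuous_zero_one_of_isClosed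
    hUopen.isClosed_compl hKclosed (Set.disjoint_compl_left_iff_subset.mpr hKU)
  set f : X →ᵇ ℝ := BoundedContinuousFunction.mkOfCompact f₀ with hfdef
  have hfapp : ∀ x, f x = f₀ x := fun x => rfl
  refine ⟨f, fun x => hf01 x, ?_, ?_⟩
  · have hle : ∀ x, f x ≤ U.indicator (fun _ => (1:ℝ)) x := by
      intro x
      by_cases hxU : x ∈ U
      · simpa [Set.indicator_of_mem hxU, hfapp] using (hf01 x).2
      · have hx0 : f x = 0 := hf0 (by simpa using hxU)
        simp [hx0, Set.indicator_of_notMem hxU]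
    calc ∫ x, f x ∂ν ≤ ∫ x, U.indicator (fun _ => (1:ℝ)) x ∂ν :=
          integral_mono (f.integrable ν)
            ((integrable_const (1:ℝ)).indicator hUopen.measurableSet) hle
      _ = (ν U).toReal := by
          rw [integral_indicator_const (1:ℝ) hUopen.measurableSet]; simp; rfl
      _ < δ := ENNReal.toReal_lt_of_lt_ofReal hνU
  · have hle : ∀ x, (1 - f x) ≤ Kᶜ.indicator (fun _ => (1:ℝ)) x := by
      intro x
      by_cases hxK : x ∈ K
      · have hx1 : f x = 1 := hf1 hxK
        have : x ∉ Kᶜ := by simpa using hxK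
        simp [hx1, Set.indicator_of_notMem this]
      · have h01 : (0:ℝ) ≤ f x := (hf01 x).1
        rw [Set.indicator_of_mem (show x ∈ Kᶜ from hxK)]
        linarith
    calc ∫ x, (1 - f x) ∂μ ≤ ∫ x, Kᶜ.indicator (fun _ => (1:ℝ)) x ∂μ :=
          integral_mono ((integrable_const (1:ℝ)).sub (f.integrable μ))
            ((integrable_const (1:ℝ)).indicator hKclosed.measurableSet.compl) hle
      _ = (μ Kᶜ).toReal := by
          rw [integral_indicator_const (1:ℝ) hKclosed.measurableSet.compl]; simp; rfl
      _ < δ := ENNReal.toReal_lt_of_lt_ofReal hμKc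

private lemma rainwater_uniform
    (F : Set (ProbabilityMeasure X)) (hFcompact : IsCompact F)
    (hFconvex : ∀ lam₁ ∈ F, ∀ lam₂ ∈ F, ∀ t : NNReal, t ≤ 1 →
      ∃ lam ∈ F, (lam : Measure X) = t • (lam₁ : Measure X) + (1 - t) • (lam₂ : Measure X))
    (μ : Measure X) [IsFiniteMeasure μ]
    (hsing : ∀ lam ∈ F, μ ⟂ₘ (lam : Measure X)) (hne : F.Nonempty)
    {η : ℝ} (hη : 0 < η) :
    ∃ g : X →ᵇ ℝ, (∀ x, g x ∈ Set.Icc (0:ℝ) 1) ∧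
      (∀ lam ∈ F, (∫ x, g x ∂(lam : Measure X)) < η) ∧ (∫ x, (1 - g x) ∂μ) < η := by
  classical
  have hη4 : 0 < η/4 := by linarith
  have hchoice : ∀ i : F, ∃ f : X →ᵇ ℝ, (∀ x, f x ∈ Set.Icc (0:ℝ) 1) ∧
      (∫ x, f x ∂((i : ProbabilityMeasure X) : Measure X)) < η/4 ∧
      (∫ x, (1 - f x) ∂μ) < η/4 :=
    fun i => rainwater_pointwise μ _ (hsing i i.2) hη4
  choose f hf01 hfl hfm using hchoice
  set U : F → Set (ProbabilityMeasure X) :=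
    fun i => (fun lam : ProbabilityMeasure X => ∫ x, f i x ∂(lam : Measure X)) ⁻¹'
      Set.Iio (η/4) with hU
  have hUopen : ∀ i, IsOpen (U i) := fun i =>
    isOpen_Iio.preimage (ProbabilityMeasure.continuous_integral_boundedContinuousFunction (f i))
  have hcover : F ⊆ ⋃ i, U i := fun lam hlam =>
    Set.mem_iUnion.mpr ⟨⟨lam, hlam⟩, hfl ⟨lam, hlam⟩⟩
  obtain ⟨t, ht⟩ := hFcompact.elim_finite_subcover U hUopen hcover
  set b : F → ℝ := fun i => ∫ x, (1 - f i x) ∂μ with hb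
  set Φ : ProbabilityMeasure X → ({i : F // i ∈ t} → ℝ) :=
    fun lam j => (∫ x, f j.1 x ∂(lam : Measure X)) + b j.1 with hΦ
  have hΦcont : Continuous Φ := continuous_pi fun j =>
    (ProbabilityMeasure.continuous_integral_boundedContinuousFunction (f j.1)).add
      continuous_const
  set K : Set ({i : F // i ∈ t} → ℝ) := Φ '' F with hKdef
  have hKcomp : IsCompact K := hFcompact.image hΦcont
  have hKconv : Convex ℝ K := by
    rintro x ⟨lam₁, h₁, rfl⟩ y ⟨lam₂, h₂, rfl⟩ a a' ha ha' haa
    obtain ⟨lam, hlamF, hlameq⟩ := hFconvex lam₁ h₁ lam₂ h₂ a.toNNReal (by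
      rw [← Real.toNNReal_one]; exact Real.toNNReal_le_toNNReal (by linarith))
    have hsub : (1 : ℝ≥0) - a.toNNReal = a'.toNNReal := by
      have hadd : a.toNNReal + a'.toNNReal = 1 := by
        rw [← Real.toNNReal_add ha ha', haa, Real.toNNReal_one]
      rw [← hadd, add_tsub_cancel_left]
    refine ⟨lam, hlamF, ?_⟩
    funext j
    have hint : (∫ x, f j.1 x ∂(lam : Measure X)) =
        a * (∫ x, f j.1 x ∂(lam₁ : Measure X)) + a' * (∫ x, f j.1 x ∂(lam₂ : Measure X)) := by
      rw [hlameq, hsub,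
        integral_add_measure ((f j.1).integrable _) ((f j.1).integrable _),
        integral_smul_nnreal_measure, integral_smul_nnreal_measure]
      simp [NNReal.smul_def, Real.coe_toNNReal _ ha, Real.coe_toNNReal _ ha']
    simp only [hΦ, Pi.add_apply, Pi.smul_apply, smul_eq_mul]
    rw [hint]; ring_nf
    have : a * b j.1 + a' * b j.1 = b j.1 := by
      rw [← add_mul, haa, one_mul]
    linarith
  set Q : Set ({i : F // i ∈ t} → ℝ) := {x | ∀ j, η/2 ≤ x j} with hQ
  have hQclosed : IsClosed Q := by
    have : Q = ⋂ j, (fun x : {i : F // i ∈ t} → ℝ => x j) ⁻¹' Set.Ici (η/2) := by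
      ext x; simp [hQ]
    rw [this]
    exact isClosed_iInter fun j => isClosed_Ici.preimage (continuous_apply j)
  have hQconv : Convex ℝ Q := by
    intro x hx y hy a a' ha ha' haa j
    have h1 := hx j
    have h2 := hy j
    simp only [Pi.add_apply, Pi.smul_apply, smul_eq_mul]
    have : η/2 = a * (η/2) + a' * (η/2) := by rw [← add_mul, haa, one_mul]
    rw [this]
    exact add_le_add (mul_le_mul_of_nonneg_left h1 ha) (mul_le_mul_of_nonneg_left h2 ha')
  have hdisj : Disjoint K Q := by
    rw [Set.disjoint_left]
    rintro x ⟨lam, hlam, rfl⟩ hxQ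
    obtain ⟨i, hit, hiU⟩ := Set.mem_iUnion₂.mp (ht hlam)
    have h1 : (∫ x, f i x ∂(lam : Measure X)) < η/4 := hiU
    have h2 : b i < η/4 := hfm i
    have h3 := hxQ ⟨i, hit⟩
    simp only [hΦ] at h3
    linarith
  obtain ⟨L, u, v, hLK, huv, hLQ⟩ :=
    geometric_hahn_banach_compact_closed hKconv hKcomp hQconv hQclosed hdisj
  set w : {i : F // i ∈ t} → ℝ := fun j => L (Pi.single j 1) with hw
  have hsingle : ∀ (j : {i : F // i ∈ t}) (c : ℝ),
      (Pi.single j c : {i : F // i ∈ t} → ℝ) =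
        c • (Pi.single j (1:ℝ) : {i : F // i ∈ t} → ℝ) := by
    intro j c
    funext k
    by_cases h : k = j
    · subst h; simp
    · simp [Pi.single_eq_of_ne h]
  have hLrepr : ∀ x : {i : F // i ∈ t} → ℝ, L x = ∑ j, x j * w j := by
    intro x
    conv_lhs => rw [← Finset.univ_sum_single x]
    rw [map_sum]
    refine Finset.sum_congr rfl fun j _ => ?_
    rw [hsingle j (x j), L.map_smul, smul_eq_mul, hw]
  set q₀ : {i : F // i ∈ t} → ℝ := fun _ => η/2 with hq₀def
  have hq₀mem : q₀ ∈ Q := fun j => le_refl _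
  have hq₀ : L q₀ = (η/2) * ∑ j, w j := by
    rw [hLrepr, Finset.mul_sum]
  have hwnonneg : ∀ j, 0 ≤ w j := by
    intro j
    by_contra hneg
    push_neg at hneg
    set d : ℝ := -(w j) with hd
    have hdpos : 0 < d := by simp [hd]; linarith
    have hvq₀ : v < L q₀ := hLQ q₀ hq₀mem
    set c : ℝ := (L q₀ - v + 1) / d with hc
    have hc0 : 0 ≤ c := div_nonneg (by linarith) hdpos.le
    have hmem : (q₀ + c • (Pi.single j (1:ℝ) : {i : F // i ∈ t} → ℝ)) ∈ Q := by
      intro k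
      simp only [Pi.add_apply, Pi.smul_apply, smul_eq_mul]
      rcases eq_or_ne k j with rfl | hkj
      · simp only [hq₀def, Pi.single_eq_same, mul_one]
        linarith
      · simp [Pi.single_eq_of_ne hkj, hq₀def]
    have hlt := hLQ _ hmem
    rw [L.map_add, L.map_smul, smul_eq_mul] at hlt
    have hcd : c * d = L q₀ - v + 1 := div_mul_cancel₀ _ hdpos.ne'
    have hcw : c * w j = -(L q₀ - v + 1) := by
      have : w j = -d := by simp [hd]
      rw [this]; rw [mul_neg, hcd]
    rw [hcw] at hlt
    linarith
  obtain ⟨lam0, hlam0⟩ := hne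
  have hk0 : L (Φ lam0) < L q₀ :=
    lt_trans (lt_trans (hLK _ ⟨lam0, hlam0, rfl⟩) huv) (hLQ q₀ hq₀mem)
  set S : ℝ := ∑ j, w j with hS
  have hS0 : 0 ≤ S := Finset.sum_nonneg fun j _ => hwnonneg j
  have hSpos : 0 < S := by
    rcases hS0.lt_or_eq with h | h
    · exact h
    · exfalso
      have hall : ∀ j ∈ Finset.univ, w j = 0 :=
        (Finset.sum_eq_zero_iff_of_nonneg (fun j _ => hwnonneg j)).mp h.symm
      have h1 : L (Φ lam0) = 0 := by
        rw [hLrepr]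
        exact Finset.sum_eq_zero fun j hj => by rw [hall j hj, mul_zero]
      have h2 : L q₀ = 0 := by
        rw [hLrepr]
        exact Finset.sum_eq_zero fun j hj => by rw [hall j hj, mul_zero]
      rw [h1, h2] at hk0
      exact lt_irrefl _ hk0
  set g : X →ᵇ ℝ := ∑ j, (w j / S) • f j.1 with hgdef
  have hgapp : ∀ x, g x = ∑ j, (w j / S) * f j.1 x := by
    intro x
    rw [hgdef]
    simp
  have hws : ∑ j, w j / S = 1 := by
    rw [← Finset.sum_div, ← hS, div_self hSpos.ne']
  have hg01 : ∀ x, g x ∈ Set.Icc (0:ℝ) 1 := by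
    intro x
    rw [hgapp]
    constructor
    · exact Finset.sum_nonneg fun j _ =>
        mul_nonneg (div_nonneg (hwnonneg j) hS0) (hf01 j.1 x).1
    · calc ∑ j, (w j / S) * f j.1 x ≤ ∑ j, (w j / S) * 1 :=
            Finset.sum_le_sum fun j _ =>
              mul_le_mul_of_nonneg_left (hf01 j.1 x).2 (div_nonneg (hwnonneg j) hS0)
        _ = 1 := by simpa using hws
  have hgint : ∀ m : Measure X, ∀ _ : IsFiniteMeasure m,
      (∫ x, g x ∂m) = ∑ j, (w j / S) * ∫ x, f j.1 x ∂m := by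
    intro m hm
    simp_rw [hgapp]
    rw [integral_finset_sum Finset.univ (fun j _ => ((f j.1).integrable m).const_mul _)]
    exact Finset.sum_congr rfl fun j _ => integral_const_mul _ _
  have hbj : ∀ j : {i : F // i ∈ t}, b j.1 = (∫ x, (1:ℝ) ∂μ) - ∫ x, f j.1 x ∂μ := by
    intro j
    rw [hb]
    exact integral_sub (integrable_const 1) ((f j.1).integrable μ)
  have hT : (∫ x, (1 - g x) ∂μ) = ∑ j, (w j / S) * b j.1 := by
    rw [integral_sub (integrable_const 1) (g.integrable μ), hgint μ inferInstance]
    have : ∑ j, (w j / S) * b j.1 =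
        ∑ j, ((w j / S) * (∫ x, (1:ℝ) ∂μ) - (w j / S) * ∫ x, f j.1 x ∂μ) := by
      refine Finset.sum_congr rfl fun j _ => ?_
      rw [hbj j, mul_sub]
    rw [this, Finset.sum_sub_distrib, ← Finset.sum_mul, hws, one_mul]
  have hkey : ∀ lam ∈ F, (∫ x, g x ∂(lam : Measure X)) + (∫ x, (1 - g x) ∂μ) < η/2 := by
    intro lam hlam
    have hLlt : L (Φ lam) < L q₀ :=
      lt_trans (lt_trans (hLK _ ⟨lam, hlam, rfl⟩) huv) (hLQ q₀ hq₀mem)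
    have hrw : (∫ x, g x ∂(lam : Measure X)) + (∫ x, (1 - g x) ∂μ) = L (Φ lam) / S := by
      rw [hgint _ inferInstance, hT, hLrepr, Finset.sum_div, ← Finset.sum_add_distrib]
      refine Finset.sum_congr rfl fun j _ => ?_
      simp only [hΦ]
      field_simp
    rw [hrw]
    have hq : L q₀ / S = η/2 := by
      rw [hq₀, mul_div_assoc, div_self hSpos.ne', mul_one]
    calc L (Φ lam) / S < L q₀ / S := by
          gcongr
      _ = η/2 := hq
  refine ⟨g, hg01, ?_, ?_⟩
  · intro lam hlam
    have h2 : 0 ≤ ∫ x, (1 - g x) ∂μ := integral_nonneg fun x => by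
      have := (hg01 x).2
      simp only [Pi.zero_apply]
      linarith
    have := hkey lam hlam
    linarith
  · have h1 : 0 ≤ ∫ x, g x ∂(lam0 : Measure X) := integral_nonneg fun x => (hg01 x).1
    have := hkey lam0 hlam0
    linarith

private lemma rainwater_toReal_zero {c : ℝ≥0∞} (hc : c ≠ ∞)
    (h : ∀ n : ℕ, c.toReal ≤ (1/2:ℝ)^n) : c = 0 := by
  have htends : Filter.Tendsto (fun n : ℕ => ((1:ℝ)/2)^n) Filter.atTop (𝓝 0) :=
    tendsto_pow_atTop_nhds_zero_of_lt_one (by norm_num) (by norm_num)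
  have h0 : c.toReal ≤ 0 := ge_of_tendsto htends (Filter.Eventually.of_forall h)
  have : c.toReal = 0 := le_antisymm h0 ENNReal.toReal_nonneg
  rcases (ENNReal.toReal_eq_zero_iff c).mp this with h' | h'
  · exact h'
  · exact absurd h' hc

end helpers

theorem stmt_8 {X : Type*} [MetricSpace X] [CompactSpace X]
    [MeasurableSpace X] [BorelSpace X]
    (F : Set (ProbabilityMeasure X)) (hFcompact : IsCompact F)
    (hFconvex : ∀ lam₁ ∈ F, ∀ lam₂ ∈ F, ∀ t : NNReal, t ≤ 1 →
      ∃ lam ∈ F, (lam : Measure X) = t • (lam₁ : Measure X) + (1 - t) • (lam₂ : Measure X))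
    (μ : Measure X) [IsFiniteMeasure μ]
    (hsing : ∀ lam ∈ F, μ ⟂ₘ (lam : Measure X)) :
    ∃ E : Set X, MeasurableSet E ∧ μ Eᶜ = 0 ∧ ∀ lam ∈ F, (lam : Measure X) E = 0 := by
  rcases F.eq_empty_or_nonempty with rfl | hne
  · exact ⟨Set.univ, MeasurableSet.univ, by simp, by simp⟩
  have hgn : ∀ n : ℕ, ∃ g : X →ᵇ ℝ, (∀ x, g x ∈ Set.Icc (0:ℝ) 1) ∧
      (∀ lam ∈ F, (∫ x, g x ∂(lam : Measure X)) < (1/4:ℝ)^(n+1)) ∧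
      (∫ x, (1 - g x) ∂μ) < (1/4:ℝ)^(n+1) :=
    fun n => rainwater_uniform F hFcompact hFconvex μ hsing hne (by positivity)
  choose g hg01 hgl hgm using hgn
  set A : ℕ → Set X := fun n => {x | (1/2:ℝ)^(n+1) ≤ g n x} with hA
  have hAclosed : ∀ n, IsClosed (A n) := fun n =>
    isClosed_le continuous_const (g n).continuous
  have hAmeas : ∀ n, MeasurableSet (A n) := fun n => (hAclosed n).measurableSet
  have hpow : ∀ n : ℕ, ((1:ℝ)/4)^(n+1) = (1/2:ℝ)^(n+1) * (1/2:ℝ)^(n+1) := by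
    intro n; rw [← mul_pow]; norm_num
  have hlA : ∀ lam ∈ F, ∀ n, ((lam : Measure X) (A n)).toReal ≤ (1/2:ℝ)^(n+1) := by
    intro lam hlam n
    have hp : (0:ℝ) < (1/2:ℝ)^(n+1) := by positivity
    have hle : ∀ x, (A n).indicator (fun _ => (1/2:ℝ)^(n+1)) x ≤ g n x := by
      intro x
      by_cases hx : x ∈ A n
      · rw [Set.indicator_of_mem hx]; exact hx
      · rw [Set.indicator_of_notMem hx]; exact (hg01 n x).1
    have hmark : (1/2:ℝ)^(n+1) * ((lam : Measure X) (A n)).toReal ≤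
        ∫ x, g n x ∂(lam : Measure X) := by
      calc (1/2:ℝ)^(n+1) * ((lam : Measure X) (A n)).toReal
          = ∫ x, (A n).indicator (fun _ => (1/2:ℝ)^(n+1)) x ∂(lam : Measure X) := by
            rw [integral_indicator_const _ (hAmeas n)]
            simp [mul_comm]; rfl
        _ ≤ _ := integral_mono ((integrable_const _).indicator (hAmeas n))
            ((g n).integrable _) hle
    have h2 := hgl n lam hlam
    rw [hpow n] at h2
    have := lt_of_mul_lt_mul_left (lt_of_le_of_lt hmark h2) hp.le
    linarith
  have hmA : ∀ n, (μ (A n)ᶜ).toReal ≤ (1/2:ℝ)^n := by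
    intro n
    have hle : ∀ x, (A n)ᶜ.indicator (fun _ => (1/2:ℝ)) x ≤ 1 - g n x := by
      intro x
      by_cases hx : x ∈ (A n)ᶜ
      · rw [Set.indicator_of_mem hx]
        have hgx : g n x < (1/2:ℝ)^(n+1) := by
          have : ¬ ((1/2:ℝ)^(n+1) ≤ g n x) := hx
          linarith [lt_of_not_ge this]
        have h2 : (1/2:ℝ)^(n+1) ≤ (1/2:ℝ)^1 :=
          pow_le_pow_of_le_one (by norm_num) (by norm_num) (by omega)
        simp only [pow_one] at h2
        linarith
      · rw [Set.indicator_of_notMem hx]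
        have := (hg01 n x).2
        linarith
    have hmark : (1/2:ℝ) * (μ (A n)ᶜ).toReal ≤ ∫ x, (1 - g n x) ∂μ := by
      calc (1/2:ℝ) * (μ (A n)ᶜ).toReal
          = ∫ x, (A n)ᶜ.indicator (fun _ => (1/2:ℝ)) x ∂μ := by
            rw [integral_indicator_const _ (hAmeas n).compl]
            simp [mul_comm]; rfl
        _ ≤ _ := integral_mono ((integrable_const _).indicator (hAmeas n).compl)
            ((integrable_const 1).sub ((g n).integrable μ)) hle
    have h2 := hgm n
    have h3 : ((1:ℝ)/4)^(n+1) ≤ (1/2:ℝ) * (1/2:ℝ)^n := by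
      rw [hpow n]
      have h4 : (1/2:ℝ)^(n+1) ≤ (1/2:ℝ) := by
        have := pow_le_pow_of_le_one (by norm_num : (0:ℝ) ≤ 1/2)
          (by norm_num : (1/2:ℝ) ≤ 1) (by omega : 1 ≤ n+1)
        simpa using this
      have h5 : (0:ℝ) < (1/2:ℝ)^(n+1) := by positivity
      calc (1/2:ℝ)^(n+1) * (1/2:ℝ)^(n+1) ≤ (1/2:ℝ) * (1/2:ℝ)^(n+1) := by nlinarith
        _ = (1/2:ℝ) * ((1/2:ℝ) * (1/2:ℝ)^n) := by rw [pow_succ]; ring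
        _ ≤ (1/2:ℝ) * (1/2:ℝ)^n := by
            have : (0:ℝ) ≤ (1/2:ℝ)^n := by positivity
            nlinarith
    have := lt_of_mul_lt_mul_left
      (lt_of_le_of_lt hmark (lt_of_lt_of_le h2 h3)) (by norm_num : (0:ℝ) ≤ 1/2)
    linarith
  refine ⟨⋂ n, ⋃ k, ⋃ (_ : n ≤ k), A k, ?_, ?_, ?_⟩
  · exact MeasurableSet.iInter fun n => MeasurableSet.iUnion fun k =>
      MeasurableSet.iUnion fun _ => hAmeas k
  · have hcompl : (⋂ n, ⋃ k, ⋃ (_ : n ≤ k), A k)ᶜ =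
        ⋃ n, ⋂ k, ⋂ (_ : n ≤ k), (A k)ᶜ := by
      simp [Set.compl_iInter, Set.compl_iUnion]
    rw [hcompl]
    refine measure_iUnion_null fun n => ?_
    refine rainwater_toReal_zero (measure_ne_top μ _) fun m => ?_
    have hsub : (⋂ k, ⋂ (_ : n ≤ k), (A k)ᶜ) ⊆ (A (n+m))ᶜ :=
      Set.iInter_subset_of_subset (n+m) (Set.iInter_subset _ (Nat.le_add_right _ _))
    calc (μ (⋂ k, ⋂ (_ : n ≤ k), (A k)ᶜ)).toReal
        ≤ (μ (A (n+m))ᶜ).toReal :=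
          ENNReal.toReal_mono (measure_ne_top μ _) (measure_mono hsub)
      _ ≤ (1/2:ℝ)^(n+m) := hmA (n+m)
      _ ≤ (1/2:ℝ)^m := pow_le_pow_of_le_one (by norm_num) (by norm_num) (by omega)
  · intro lam hlam
    refine rainwater_toReal_zero (measure_ne_top _ _) fun n => ?_
    have hEsub : (⋂ n, ⋃ k, ⋃ (_ : n ≤ k), A k) ⊆ ⋃ j : ℕ, A (n+j) := by
      intro x hx
      have hx' := Set.mem_iInter.mp hx n
      obtain ⟨k, hk, hxk⟩ := by simpa using hx'
      exact Set.mem_iUnion.mpr ⟨k - n, by rwa [Nat.add_sub_cancel' hk]⟩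
    have h1 : (lam : Measure X) (⋂ n, ⋃ k, ⋃ (_ : n ≤ k), A k) ≤
        ∑' j : ℕ, (lam : Measure X) (A (n+j)) :=
      le_trans (measure_mono hEsub) (measure_iUnion_le _)
    have h2 : ∑' j : ℕ, (lam : Measure X) (A (n+j)) ≤
        ∑' j : ℕ, ENNReal.ofReal ((1/2:ℝ)^(n+j+1)) :=
      ENNReal.tsum_le_tsum fun j =>
        (ENNReal.le_ofReal_iff_toReal_le (measure_ne_top _ _) (by positivity)).mpr
          (hlA lam hlam (n+j))
    have hsummable : Summable (fun j : ℕ => ((1:ℝ)/2)^(n+1) * (1/2:ℝ)^j) :=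
      (summable_geometric_two).mul_left _
    have h3 : ∑' j : ℕ, ENNReal.ofReal ((1/2:ℝ)^(n+j+1)) =
        ENNReal.ofReal ((1/2:ℝ)^n) := by
      have hrw : ∀ j : ℕ, ((1:ℝ)/2)^(n+j+1) = ((1:ℝ)/2)^(n+1) * (1/2:ℝ)^j := by
        intro j
        rw [← pow_add]
        ring_nf
      simp_rw [hrw]
      rw [← ENNReal.ofReal_tsum_of_nonneg (fun j => by positivity) hsummable]
      congr 1
      rw [tsum_mul_left, tsum_geometric_two, pow_succ]
      ring
    have hfin := le_trans h1 (le_trans h2 (le_of_eq h3))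
    calc ((lam : Measure X) (⋂ n, ⋃ k, ⋃ (_ : n ≤ k), A k)).toReal
        ≤ (ENNReal.ofReal ((1/2:ℝ)^n)).toReal :=
          ENNReal.toReal_mono ENNReal.ofReal_ne_top hfin
      _ = (1/2:ℝ)^n := ENNReal.toReal_ofReal (by positivity)
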